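/- Let $n\ge 1$ and define the real polynomial (the continuous dual Hahn polynomial with parameters $a=b=c=1/2$, as a function of real $x$) by $S_n(x^2;1/2,1/2,1/2) = (n!)^2\sum_{\nu=0}^{n}\frac{(-1)^\nu\, n!}{(n-\nu)!\,\nu!\,(\nu!)^2}\prod_{j=0}^{\nu-1}\Big(\big(j+\tfrac12\big)^2+x^2\Big)$. Let $x_{n,1}$ be its smallest positive zero, and let $d_n$ be the smallest constant such that $\sum_{k=1}^{n}\big(\frac{1}{k}\sum_{j=1}^{k}a_j\big)^2 \le d_n\sum_{k=1}^{n}a_k^2$ for all real $a_1,\dots,a_n$. Then $d_n = 4\Big(1-\frac{4x_{n,1}^2}{1+4x_{n,1}^2}\Big) = \frac{4}{1+4x_{n,1}^2}$. -/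

import Mathlib

open Real Finset

/-- The continuous dual Hahn polynomial `S_n(x^2; 1/2, 1/2, 1/2)`, viewed as a
real function of `x`. -/
noncomputable def contDualHahnHalf (n : ℕ) (x : ℝ) : ℝ :=
  ((n.factorial : ℝ)) ^ 2 *
    ∑ ν ∈ Finset.range (n + 1),
      ((-1 : ℝ) ^ ν * (n.factorial : ℝ) /
          (((n - ν).factorial : ℝ) * (ν.factorial : ℝ) * ((ν.factorial : ℝ)) ^ 2)) *
        ∏ j ∈ Finset.range ν, (((j : ℝ) + 1 / 2) ^ 2 + x ^ 2)

/-- minors of the Jacobi matrix minus μ -/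
noncomputable def EE (μ : ℝ) : ℕ → ℝ
  | 0 => 1
  | 1 => 2 - μ
  | (k+2) => (2*((k:ℝ)+2)^2 - μ) * EE μ (k+1) - (((k:ℝ)+1)*((k:ℝ)+2))^2 * EE μ k

/-- bordered determinant -/
noncomputable def DD (μ : ℝ) (N : ℕ) : ℝ :=
  ((N:ℝ)^2 - μ) * EE μ (N-1) - (((N:ℝ)-1)*(N:ℝ))^2 * EE μ (N-2)

/-- candidate eigenvector -/
noncomputable def vv (μ : ℝ) : ℕ → ℝ
  | 0 => 0
  | (j+1) => EE μ j / ((j.factorial : ℝ) * ((j+1).factorial : ℝ))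

lemma EE_zero (μ : ℝ) : EE μ 0 = 1 := rfl
lemma EE_one (μ : ℝ) : EE μ 1 = 2 - μ := rfl
lemma EE_rec (μ : ℝ) (k : ℕ) :
    EE μ (k+2) = (2*((k:ℝ)+2)^2 - μ) * EE μ (k+1) - (((k:ℝ)+1)*((k:ℝ)+2))^2 * EE μ k := rfl

lemma continuous_EE (j : ℕ) : Continuous fun μ => EE μ j := by
  induction j using Nat.twoStepInduction with
  | zero => simpa [EE_zero] using continuous_const
  | one =>
    have : (fun μ => EE μ 1) = fun μ : ℝ => 2 - μ := rfl
    rw [this]; fun_prop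
  | more k h1 h2 =>
    have : (fun μ => EE μ (k+2)) = fun μ =>
        (2*((k:ℝ)+2)^2 - μ) * EE μ (k+1) - (((k:ℝ)+1)*((k:ℝ)+2))^2 * EE μ k := rfl
    rw [this]
    exact ((continuous_const.sub continuous_id).mul h2).sub (continuous_const.mul h1)

lemma continuous_DD (N : ℕ) : Continuous fun μ => DD μ N := by
  unfold DD
  exact ((continuous_const.sub continuous_id).mul (continuous_EE _)).sub
    (continuous_const.mul (continuous_EE _))

lemma vv_succ (μ : ℝ) (j : ℕ) :
    vv μ (j+1) = EE μ j / ((j.factorial : ℝ) * ((j+1).factorial : ℝ)) := rfl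

lemma vv_one (μ : ℝ) : vv μ 1 = 1 := by
  simp [vv_succ, EE_zero]

lemma fact_pos' (j : ℕ) : (0:ℝ) < (j.factorial : ℝ) := by
  exact_mod_cast j.factorial_pos

/-- interior eigen rows (valid for all k ≥ 1), as identity in μ modulo the recurrence -/
lemma vv_row (μ : ℝ) (k : ℕ) (hk : 1 ≤ k) :
    (2*(k:ℝ)^2 - μ) * vv μ k
      = ((k:ℝ)-1)*(k:ℝ) * vv μ (k-1) + (k:ℝ)*((k:ℝ)+1) * vv μ (k+1) := by
  obtain ⟨j, rfl⟩ := Nat.exists_eq_add_of_le hk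
  rw [Nat.add_comm 1 j]
  rcases j with _ | i
  · -- k = 1
    simp only [vv_succ, vv]
    rw [EE_one, EE_zero]
    norm_num [Nat.factorial]
    ring
  · -- k = i+2
    have hsub : (i+2) - 1 = i+1 := rfl
    rw [hsub, vv_succ, vv_succ, vv_succ]
    have hrec := EE_rec μ i
    have h1 : ((i+1).factorial : ℝ) ≠ 0 := by positivity
    have h2 : ((i+2).factorial : ℝ) ≠ 0 := by positivity
    have h3 : ((i+3).factorial : ℝ) ≠ 0 := by positivity
    have hf2 : ((i+2).factorial : ℝ) = ((i:ℝ)+2) * ((i+1).factorial : ℝ) := by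
      have : (i+2) = (i+1)+1 := rfl
      rw [this, Nat.factorial_succ]; push_cast; ring
    have hf3 : ((i+3).factorial : ℝ) = ((i:ℝ)+3) * (((i:ℝ)+2) * ((i+1).factorial : ℝ)) := by
      have : (i+3) = (i+2)+1 := rfl
      rw [this, Nat.factorial_succ]; push_cast; rw [hf2]; ring
    have hf1 : ((i+1).factorial : ℝ) = ((i:ℝ)+1) * (i.factorial : ℝ) := by
      rw [Nat.factorial_succ]; push_cast; ring
    have h0 : (i.factorial : ℝ) ≠ 0 := by positivity
    push_cast
    rw [hrec]
    field_simp [hf3, hf2, hf1]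
    simp only [show (3:ℕ)+i = i+3 from by ring, show (2:ℕ)+i = i+2 from by ring,
      show (1:ℕ)+i = i+1 from by ring, hf3, hf2, hf1]
    push_cast
    ring

/-- boundary row -/
lemma vv_row_end (μ : ℝ) (n : ℕ) (hn : 1 ≤ n) :
    ((n:ℝ)^2 - μ) * vv μ n - ((n:ℝ)-1)*(n:ℝ) * vv μ (n-1)
      = DD μ n / (((n-1).factorial : ℝ) * (n.factorial : ℝ)) := by
  obtain ⟨j, rfl⟩ := Nat.exists_eq_add_of_le hn
  rw [Nat.add_comm 1 j]
  rcases j with _ | i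
  · simp only [vv_succ, vv, DD]
    norm_num [Nat.factorial, EE_zero]
  · have hsub : (i+2) - 1 = i+1 := rfl
    have hsub2 : (i+2) - 2 = i := rfl
    rw [hsub, vv_succ, vv_succ]
    unfold DD
    rw [hsub, hsub2]
    have h1 : ((i+1).factorial : ℝ) ≠ 0 := by positivity
    have h2 : ((i+2).factorial : ℝ) ≠ 0 := by positivity
    have hf2 : ((i+2).factorial : ℝ) = ((i:ℝ)+2) * ((i+1).factorial : ℝ) := by
      have : (i+2) = (i+1)+1 := rfl
      rw [this, Nat.factorial_succ]; push_cast; ring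
    have hf1 : ((i+1).factorial : ℝ) = ((i:ℝ)+1) * (i.factorial : ℝ) := by
      rw [Nat.factorial_succ]; push_cast; ring
    have h0 : (i.factorial : ℝ) ≠ 0 := by positivity
    push_cast
    field_simp [hf2, hf1]
    simp only [show (2:ℕ)+i = i+2 from by ring, show (1:ℕ)+i = i+1 from by ring, hf2, hf1]
    push_cast
    ring


noncomputable def PP (ν : ℕ) (x : ℝ) : ℝ := ∏ j ∈ Finset.range ν, (((j : ℝ) + 1 / 2) ^ 2 + x ^ 2)

noncomputable def cc (N ν : ℕ) : ℝ :=
  (-1 : ℝ) ^ ν * (N.choose ν : ℝ) * ((N.factorial : ℝ) / (ν.factorial : ℝ)) ^ 2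

lemma cc_eq_zero {N ν : ℕ} (h : N < ν) : cc N ν = 0 := by
  unfold cc
  rw [Nat.choose_eq_zero_of_lt h]
  simp

lemma S_eq_sum (N : ℕ) (x : ℝ) :
    contDualHahnHalf N x = ∑ ν ∈ Finset.range (N+1), cc N ν * PP ν x := by
  unfold contDualHahnHalf
  rw [Finset.mul_sum]
  apply Finset.sum_congr rfl
  intro ν hν
  rw [Finset.mem_range] at hν
  have hνN : ν ≤ N := Nat.lt_succ_iff.mp hν
  unfold cc PP
  rw [Nat.cast_choose ℝ hνN]
  have h1 : ((ν.factorial : ℝ)) ≠ 0 := by positivity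
  have h2 : (((N - ν).factorial : ℝ)) ≠ 0 := by positivity
  have h3 : ((N.factorial : ℝ)) ≠ 0 := by positivity
  generalize (∏ j ∈ Finset.range ν, (((j : ℝ) + 1 / 2) ^ 2 + x ^ 2)) = P
  field_simp

lemma S_eq_sum' (N M : ℕ) (h : N + 1 ≤ M) (x : ℝ) :
    contDualHahnHalf N x = ∑ ν ∈ Finset.range M, cc N ν * PP ν x := by
  rw [S_eq_sum]
  apply Finset.sum_subset
  · exact Finset.range_subset_range.mpr h
  · intro ν _ hν
    rw [Finset.mem_range, not_lt] at hν
    rw [cc_eq_zero (by omega)]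
    ring

lemma PP_succ (ν : ℕ) (x : ℝ) :
    PP (ν+1) x = PP ν x * (((ν : ℝ) + 1/2)^2 + x^2) := by
  unfold PP
  rw [Finset.prod_range_succ]

lemma PP_mul (ν : ℕ) (x : ℝ) :
    (1/4 + x^2) * PP ν x = PP (ν+1) x - (ν * ((ν:ℝ)+1)) * PP ν x := by
  rw [PP_succ]; ring

/-- the key coefficient identity -/
lemma ccK (N ν : ℕ) :
    cc (N+2) ν = (((((N:ℝ)+2)^2 + ((N:ℝ)+1)^2) + ν*((ν:ℝ)+1)) * cc (N+1) ν
      - ((N:ℝ)+1)^4 * cc N ν) - (if ν = 0 then (0:ℝ) else cc (N+1) (ν-1)) := by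
  rcases Nat.eq_zero_or_pos ν with h0 | hpos
  · subst h0
    rw [if_pos rfl]
    unfold cc
    simp only [Nat.choose_zero_right, Nat.cast_one, pow_zero, Nat.factorial_zero]
    have e2 : ((N+2).factorial : ℝ) = ((N:ℝ)+2) * (((N:ℝ)+1) * (N.factorial : ℝ)) := by
      show (((N+1)+1).factorial : ℝ) = _
      rw [Nat.factorial_succ, Nat.factorial_succ]; push_cast; ring
    have e1 : ((N+1).factorial : ℝ) = ((N:ℝ)+1) * (N.factorial : ℝ) := by
      rw [Nat.factorial_succ]; push_cast; ring
    rw [e2, e1]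
    ring
  · have hν1 : ν - 1 + 1 = ν := Nat.succ_pred_eq_of_pos hpos
    rw [if_neg (by omega)]
    rcases le_or_gt ν N with hle | hgt
    · -- main case: ν ≤ N
      obtain ⟨u, hu⟩ := Nat.exists_eq_add_of_le hle
      obtain ⟨w, hw⟩ := Nat.exists_eq_add_of_le hpos
      -- N = ν + u, ν = 1 + w
      have hsub0 : N - ν = u := by omega
      have hsub1 : N + 1 - ν = u + 1 := by omega
      have hsub2 : N + 2 - ν = u + 2 := by omega
      have hsub3 : N + 1 - (ν - 1) = u + 2 := by omega
      have hν : ν = w + 1 := by omega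
      have hN : N = w + 1 + u := by omega
      unfold cc
      rw [Nat.cast_choose ℝ (by omega : ν ≤ N), Nat.cast_choose ℝ (by omega : ν ≤ N+1),
          Nat.cast_choose ℝ (by omega : ν ≤ N+2), Nat.cast_choose ℝ (by omega : ν - 1 ≤ N+1),
          hsub0, hsub1, hsub2, hsub3]
      subst hν hN
      have hfe : ∀ k : ℕ, ((k+1).factorial : ℝ) = ((k:ℝ)+1) * (k.factorial : ℝ) := by
        intro k; rw [Nat.factorial_succ]; push_cast; ring
      have ew1 : (w + 1 + u) - 1 = w + u := by omega
      have e1 : ((w+1+u+1).factorial : ℝ) = ((w:ℝ)+u+2) * ((w+1+u).factorial : ℝ) := by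
        rw [hfe (w+1+u)]; push_cast; ring
      have e2 : ((w+1+u+2).factorial : ℝ)
          = ((w:ℝ)+u+3) * (((w:ℝ)+u+2) * ((w+1+u).factorial : ℝ)) := by
        show (((w+1+u+1)+1).factorial : ℝ) = _
        rw [hfe (w+1+u+1), e1]; push_cast; ring
      have e3 : ((w+1).factorial : ℝ) = ((w:ℝ)+1) * (w.factorial : ℝ) := hfe w
      have e4 : ((u+1).factorial : ℝ) = ((u:ℝ)+1) * (u.factorial : ℝ) := hfe u
      have e5 : ((u+2).factorial : ℝ) = ((u:ℝ)+2) * (((u:ℝ)+1) * (u.factorial : ℝ)) := by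
        show (((u+1)+1).factorial : ℝ) = _
        rw [hfe (u+1), e4]; push_cast; ring
      have e6 : (w + 1 - 1) = w := by omega
      rw [e6, e1, e2, e3, e4, e5]
      have p1 : ((w.factorial : ℝ)) ≠ 0 := by positivity
      have p2 : ((u.factorial : ℝ)) ≠ 0 := by positivity
      have p3 : (((w+1+u).factorial : ℝ)) ≠ 0 := by positivity
      have hpow : (-1 : ℝ) ^ (w+1) = -(-1:ℝ)^w := by rw [pow_succ]; ring
      rw [hpow]
      push_cast
      field_simp
      ring
    · rcases Nat.lt_or_ge ν (N+2) with hν2 | hν3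
      · -- ν = N+1
        have hν : ν = N + 1 := by omega
        subst hν
        have z0 : cc N (N+1) = 0 := cc_eq_zero (by omega)
        have e6 : (N + 1 - 1) = N := by omega
        rw [z0, e6]
        unfold cc
        rw [Nat.choose_self, Nat.choose_succ_self_right, Nat.choose_succ_self_right]
        have e2 : ((N+2).factorial : ℝ) = ((N:ℝ)+2) * ((N+1).factorial : ℝ) := by
          show (((N+1)+1).factorial : ℝ) = _
          rw [Nat.factorial_succ]; push_cast; ring
        have e1 : ((N+1).factorial : ℝ) = ((N:ℝ)+1) * (N.factorial : ℝ) := by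
          rw [Nat.factorial_succ]; push_cast; ring
        have p1 : ((N.factorial : ℝ)) ≠ 0 := by positivity
        have p2 : (((N+1).factorial : ℝ)) ≠ 0 := by positivity
        have hpow : (-1 : ℝ) ^ (N+1) = (-1:ℝ)^N * (-1) := by rw [pow_succ]
        rw [e2, e1, hpow]
        push_cast
        field_simp
        ring
      · rcases Nat.lt_or_ge ν (N+3) with hν4 | hν5
        · -- ν = N+2
          have hν : ν = N + 2 := by omega
          subst hν
          have z1 : cc (N+1) (N+2) = 0 := cc_eq_zero (by omega)
          have z2 : cc N (N+2) = 0 := cc_eq_zero (by omega)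
          have e6 : (N + 2 - 1) = N + 1 := by omega
          rw [z1, z2, e6]
          unfold cc
          rw [Nat.choose_self, Nat.choose_self]
          have hpow : (-1 : ℝ) ^ (N+2) = (-1:ℝ)^(N+1) * (-1) := by rw [pow_succ]
          rw [hpow]
          have p2 : (((N+1).factorial : ℝ)) ≠ 0 := by positivity
          have p3 : (((N+2).factorial : ℝ)) ≠ 0 := by positivity
          rw [div_self p2, div_self p3]
          simp
        · -- ν ≥ N+3
          rw [cc_eq_zero (by omega : N+2 < ν), cc_eq_zero (by omega : N+1 < ν),
              cc_eq_zero (by omega : N < ν), cc_eq_zero (by omega : N+1 < ν-1)]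
          ring

/-- three-term recurrence for the dual Hahn polynomials -/
lemma S_rec (N : ℕ) (x : ℝ) :
    contDualHahnHalf (N+2) x
      = (((((N:ℝ)+2)^2 + ((N:ℝ)+1)^2) - 1/4 - x^2) * contDualHahnHalf (N+1) x)
        - ((N:ℝ)+1)^4 * contDualHahnHalf N x := by
  set A : ℝ := (((N:ℝ)+2)^2 + ((N:ℝ)+1)^2) with hA
  have e2 := S_eq_sum' (N+2) (N+4) (by omega) x
  have e1 := S_eq_sum' (N+1) (N+4) (by omega) x
  have e0 := S_eq_sum' N (N+4) (by omega) x
  -- shifted sum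
  have eshift : ∑ ν ∈ Finset.range (N+4), (if ν = 0 then (0:ℝ) else cc (N+1) (ν-1)) * PP ν x
      = ∑ ν ∈ Finset.range (N+4), cc (N+1) ν * PP (ν+1) x := by
    rw [Finset.sum_range_succ' (fun ν => (if ν = 0 then (0:ℝ) else cc (N+1) (ν-1)) * PP ν x) (N+3)]
    rw [Finset.sum_range_succ (fun ν => cc (N+1) ν * PP (ν+1) x) (N+3)]
    rw [cc_eq_zero (by omega : N+1 < N+3)]
    simp
  have emul : ∑ ν ∈ Finset.range (N+4), cc (N+1) ν * PP (ν+1) x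
      = (1/4 + x^2) * contDualHahnHalf (N+1) x
        + ∑ ν ∈ Finset.range (N+4), (ν * ((ν:ℝ)+1)) * (cc (N+1) ν * PP ν x) := by
    rw [e1, Finset.mul_sum, ← Finset.sum_add_distrib]
    apply Finset.sum_congr rfl
    intro ν _
    linear_combination (-(cc (N+1) ν)) * (PP_mul ν x)
  calc contDualHahnHalf (N+2) x
      = ∑ ν ∈ Finset.range (N+4), cc (N+2) ν * PP ν x := e2
    _ = ∑ ν ∈ Finset.range (N+4),
          (((A + ν*((ν:ℝ)+1)) * (cc (N+1) ν * PP ν x) - ((N:ℝ)+1)^4 * (cc N ν * PP ν x))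
            - (if ν = 0 then (0:ℝ) else cc (N+1) (ν-1)) * PP ν x) := by
        apply Finset.sum_congr rfl
        intro ν _
        rw [ccK N ν]
        ring
    _ = (A - 1/4 - x^2) * contDualHahnHalf (N+1) x - ((N:ℝ)+1)^4 * contDualHahnHalf N x := by
        rw [Finset.sum_sub_distrib, Finset.sum_sub_distrib, eshift, emul]
        have hsplit : ∑ ν ∈ Finset.range (N+4), (A + ν*((ν:ℝ)+1)) * (cc (N+1) ν * PP ν x)
            = ∑ ν ∈ Finset.range (N+4), A * (cc (N+1) ν * PP ν x)
              + ∑ ν ∈ Finset.range (N+4), (ν*((ν:ℝ)+1)) * (cc (N+1) ν * PP ν x) := by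
          rw [← Finset.sum_add_distrib]
          apply Finset.sum_congr rfl
          intro ν _; ring
        have g1 : ∑ ν ∈ Finset.range (N+4), A * (cc (N+1) ν * PP ν x)
            = A * contDualHahnHalf (N+1) x := by rw [e1, Finset.mul_sum]
        have g0 : ∑ ν ∈ Finset.range (N+4), ((N:ℝ)+1)^4 * (cc N ν * PP ν x)
            = ((N:ℝ)+1)^4 * contDualHahnHalf N x := by rw [e0, Finset.mul_sum]
        rw [hsplit, g1, g0]
        ring

lemma S_zero (x : ℝ) : contDualHahnHalf 0 x = 1 := by
  norm_num [contDualHahnHalf]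

lemma S_one (x : ℝ) : contDualHahnHalf 1 x = 3/4 - x^2 := by
  norm_num [contDualHahnHalf, Finset.sum_range_succ, Nat.factorial]
  ring

/-- identity (III) -/
lemma EE_S (N : ℕ) (x : ℝ) :
    (1/4 + x^2) * EE (1/4 + x^2) N
      = ((N:ℝ)+1)^2 * contDualHahnHalf N x - contDualHahnHalf (N+1) x := by
  induction N using Nat.twoStepInduction with
  | zero =>
    rw [EE_zero, S_zero, S_one]; push_cast; ring
  | one =>
    have h2 := S_rec 0 x
    rw [EE_one, S_one]
    rw [show ((1:ℕ):ℝ) = 1 by norm_num]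
    rw [h2, S_one, S_zero]
    push_cast; ring
  | more N ih1 ih2 =>
    have hrec1 := S_rec (N+1) x
    have hrec0 := S_rec N x
    rw [EE_rec]
    push_cast [hrec1] at *
    linear_combination (2*((N:ℝ)+2)^2 - (1/4+x^2))*ih2 - (((N:ℝ)+1)*((N:ℝ)+2))^2*ih1 - ((N:ℝ)+2)^2 * hrec0

lemma EE_split (N : ℕ) (x : ℝ) :
    EE (1/4 + x^2) (N+1)
      = contDualHahnHalf (N+1) x + ((N:ℝ)+1)^2 * EE (1/4 + x^2) N := by
  induction N with
  | zero =>
    rw [EE_one, EE_zero, S_one]; push_cast; ring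
  | succ N ih =>
    rw [EE_rec]
    have hC := EE_S (N+1) x
    push_cast at *
    linear_combination ((N:ℝ)+2)^2 * ih - hC

/-- the central identity: DD(1/4+x²) = S_N -/
lemma DD_eq_S (N : ℕ) (hN : 1 ≤ N) (x : ℝ) :
    DD (1/4 + x^2) N = contDualHahnHalf N x := by
  obtain ⟨j, rfl⟩ := Nat.exists_eq_add_of_le hN
  rw [Nat.add_comm 1 j]
  rcases j with _ | N
  · unfold DD
    norm_num [EE_zero, S_one]
    ring
  · unfold DD
    have h1 : (N + 2) - 1 = N + 1 := rfl
    have h2 : (N + 2) - 2 = N := rfl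
    rw [h1, h2]
    have hsp := EE_split N x
    have hC := EE_S (N+1) x
    push_cast at *
    linear_combination ((N:ℝ)+2)^2 * hsp - hC


/-- summation by parts for the Hardy quadratic form -/
lemma sbp (K : ℕ) (hK : 1 ≤ K) (v : ℕ → ℝ) :
    ∑ k ∈ Finset.Icc 1 K, ((k:ℝ) * v k - ((k:ℝ)-1) * v (k-1))^2
      = ∑ k ∈ Finset.Icc 1 (K-1),
          v k * (2*(k:ℝ)^2 * v k - ((k:ℝ)-1)*(k:ℝ) * v (k-1) - (k:ℝ)*((k:ℝ)+1) * v (k+1))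
        + v K * ((K:ℝ)^2 * v K - ((K:ℝ)-1)*(K:ℝ) * v (K-1)) := by
  induction K, hK using Nat.le_induction with
  | base =>
    norm_num
    ring
  | succ K hK ih =>
    rw [Finset.sum_Icc_succ_top (by omega : 1 ≤ K + 1), ih]
    have h1 : (K + 1) - 1 = K := by omega
    rw [h1]
    obtain ⟨j, rfl⟩ := Nat.exists_eq_add_of_le hK
    rw [Nat.add_comm 1 j]
    rw [Finset.sum_Icc_succ_top (by omega : 1 ≤ j + 1)]
    have h2 : (j + 1) - 1 = j := by omega
    rw [h2]
    push_cast
    ring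

/-- generic SOS decomposition of the Hardy quadratic form w.r.t. a positive weight σ -/
lemma sosAux (K : ℕ) (hK : 1 ≤ K) (σ b : ℕ → ℝ) (hσ : ∀ k, 1 ≤ k → k ≤ K → 0 < σ k) :
    ∑ k ∈ Finset.Icc 1 K, ((k:ℝ) * b k - ((k:ℝ)-1) * b (k-1))^2
      = ∑ k ∈ Finset.Icc 1 (K-1),
          (((k:ℝ)*((k:ℝ)+1)/(σ k * σ (k+1))) * (σ (k+1) * b k - σ k * b (k+1))^2
            + ((2*(k:ℝ)^2 * σ k - ((k:ℝ)-1)*(k:ℝ) * σ (k-1) - (k:ℝ)*((k:ℝ)+1) * σ (k+1))/σ k)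
               * (b k)^2)
        + (((K:ℝ)^2 * σ K - ((K:ℝ)-1)*(K:ℝ) * σ (K-1))/σ K) * (b K)^2 := by
  induction K, hK using Nat.le_induction with
  | base =>
    have h1 : (0:ℝ) < σ 1 := hσ 1 le_rfl (by omega)
    norm_num
    field_simp
  | succ K hK ih =>
    have hσ' : ∀ k, 1 ≤ k → k ≤ K → 0 < σ k := fun k h1 h2 => hσ k h1 (by omega)
    rw [Finset.sum_Icc_succ_top (by omega : 1 ≤ K + 1), ih hσ']
    have h1 : (K + 1) - 1 = K := by omega
    rw [h1]
    obtain ⟨j, rfl⟩ := Nat.exists_eq_add_of_le hK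
    rw [Nat.add_comm 1 j]
    rw [Finset.sum_Icc_succ_top (by omega : 1 ≤ j + 1)]
    have h2 : (j + 1) - 1 = j := by omega
    rw [h2]
    have hp1 : (0:ℝ) < σ (j+1) := hσ (j+1) (by omega) (by omega)
    have hp2 : (0:ℝ) < σ (j+2) := hσ (j+2) (by omega) (by omega)
    push_cast
    field_simp
    ring

lemma EE_quarter_ratio (j : ℕ) :
    0 < EE (1/4) j ∧ (((j:ℝ)+1)*(2*(j:ℝ)+3)/2) * EE (1/4) j ≤ EE (1/4) (j+1) := by
  induction j with
  | zero =>
    constructor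
    · show (0:ℝ) < 1; norm_num
    · show (((0:ℕ):ℝ)+1)*(2*((0:ℕ):ℝ)+3)/2 * EE (1/4) 0 ≤ EE (1/4) 1
      norm_num [EE]
  | succ j ih =>
    obtain ⟨hpos, hratio⟩ := ih
    have hpos1 : 0 < EE (1/4) (j+1) := by
      have h : (0:ℝ) < (((j:ℝ)+1)*(2*(j:ℝ)+3)/2) := by positivity
      nlinarith
    refine ⟨hpos1, ?_⟩
    have hrec : EE (1/4) (j+2)
        = (2*((j:ℝ)+2)^2 - 1/4) * EE (1/4) (j+1) - (((j:ℝ)+1)*((j:ℝ)+2))^2 * EE (1/4) j := rfl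
    rw [hrec]
    have hE : EE (1/4) j * (((j:ℝ)+1)*(2*(j:ℝ)+3)) ≤ 2 * EE (1/4) (j+1) := by
      nlinarith [hratio]
    have hj3 : (0:ℝ) < ((j:ℝ)+1)*(2*(j:ℝ)+3) := by positivity
    push_cast
    nlinarith [mul_le_mul_of_nonneg_left hE (sq_nonneg (((j:ℝ)+1)*((j:ℝ)+2))), hpos1, hj3,
      mul_pos hpos1 hj3, mul_pos (mul_pos hpos1 hj3) (show (0:ℝ) < ((j:ℝ)+2)^2 by positivity)]

lemma EE_quarter_pos (j : ℕ) : 0 < EE (1/4) j := (EE_quarter_ratio j).1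

lemma DD_quarter_pos (n : ℕ) (hn : 1 ≤ n) : 0 < DD (1/4) n := by
  obtain ⟨j, rfl⟩ := Nat.exists_eq_add_of_le hn
  rw [Nat.add_comm 1 j]
  rcases j with _ | j
  · show (0:ℝ) < DD (1/4) 1
    norm_num [DD, EE]
  · unfold DD
    have h1 : (j + 2) - 1 = j + 1 := rfl
    have h2 : (j + 2) - 2 = j := rfl
    rw [h1, h2]
    obtain ⟨hpos, hratio⟩ := EE_quarter_ratio j
    have hpos1 : 0 < EE (1/4) (j+1) := EE_quarter_pos (j+1)
    have hE : EE (1/4) j * (((j:ℝ)+1)*(2*(j:ℝ)+3)) ≤ 2 * EE (1/4) (j+1) := by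
      nlinarith [hratio]
    have hj3 : (0:ℝ) < ((j:ℝ)+1)*(2*(j:ℝ)+3) := by positivity
    push_cast
    nlinarith [mul_le_mul_of_nonneg_left hE (sq_nonneg (((j:ℝ)+1)*((j:ℝ)+2))), hpos1, hj3,
      mul_pos hpos1 hj3, mul_pos (mul_pos hpos1 hj3) (show (0:ℝ) < ((j:ℝ)+2)^2 by positivity)]

lemma vv_pos (μ : ℝ) (k : ℕ) (hk : 1 ≤ k) (hE : 0 < EE μ (k-1)) : 0 < vv μ k := by
  obtain ⟨j, rfl⟩ := Nat.exists_eq_add_of_le hk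
  rw [Nat.add_comm 1 j, vv_succ]
  have h1 : (0:ℝ) < (j.factorial : ℝ) := fact_pos' j
  have h2 : (0:ℝ) < ((j+1).factorial : ℝ) := fact_pos' (j+1)
  have h3 : (1 + j) - 1 = j := by omega
  rw [h3] at hE
  positivity

/-- lower bound for the Hardy quadratic form when minors are positive -/
lemma Tlower (n : ℕ) (hn : 1 ≤ n) (μ : ℝ)
    (hE : ∀ j, j < n → 0 < EE μ j) (hD : 0 ≤ DD μ n) (b : ℕ → ℝ) :
    μ * ∑ k ∈ Finset.Icc 1 n, (b k)^2
      ≤ ∑ k ∈ Finset.Icc 1 n, ((k:ℝ) * b k - ((k:ℝ)-1) * b (k-1))^2 := by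
  have hσpos : ∀ k, 1 ≤ k → k ≤ n → 0 < vv μ k := by
    intro k h1 h2
    exact vv_pos μ k h1 (hE (k-1) (by omega))
  rw [sosAux n hn (vv μ) b hσpos]
  have hterm : ∀ k ∈ Finset.Icc 1 (n-1),
      μ * (b k)^2 ≤
        (((k:ℝ)*((k:ℝ)+1)/(vv μ k * vv μ (k+1))) * (vv μ (k+1) * b k - vv μ k * b (k+1))^2
          + ((2*(k:ℝ)^2 * vv μ k - ((k:ℝ)-1)*(k:ℝ) * vv μ (k-1)
              - (k:ℝ)*((k:ℝ)+1) * vv μ (k+1))/vv μ k) * (b k)^2) := by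
    intro k hk
    rw [Finset.mem_Icc] at hk
    have hk1 : 1 ≤ k := hk.1
    have hkn : k ≤ n - 1 := hk.2
    have hvk : 0 < vv μ k := hσpos k hk1 (by omega)
    have hvk1 : 0 < vv μ (k+1) := hσpos (k+1) (by omega) (by omega)
    have hrow := vv_row μ k hk1
    have hcoef : (2*(k:ℝ)^2 * vv μ k - ((k:ℝ)-1)*(k:ℝ) * vv μ (k-1)
        - (k:ℝ)*((k:ℝ)+1) * vv μ (k+1))/vv μ k = μ := by
      rw [div_eq_iff (ne_of_gt hvk)]
      linarith [hrow]
    rw [hcoef]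
    have hsos : 0 ≤ ((k:ℝ)*((k:ℝ)+1)/(vv μ k * vv μ (k+1)))
        * (vv μ (k+1) * b k - vv μ k * b (k+1))^2 := by
      apply mul_nonneg
      · apply div_nonneg
        · positivity
        · positivity
      · positivity
    linarith
  have hrem : μ * (b n)^2 ≤
      (((n:ℝ)^2 * vv μ n - ((n:ℝ)-1)*(n:ℝ) * vv μ (n-1))/vv μ n) * (b n)^2 := by
    have hvn : 0 < vv μ n := hσpos n hn le_rfl
    have hend := vv_row_end μ n hn
    have hfac : 0 < (((n-1).factorial : ℝ) * (n.factorial : ℝ)) := by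
      have := fact_pos' (n-1); have := fact_pos' n; positivity
    have hge : μ ≤ ((n:ℝ)^2 * vv μ n - ((n:ℝ)-1)*(n:ℝ) * vv μ (n-1))/vv μ n := by
      rw [le_div_iff₀ hvn]
      have hDq : 0 ≤ DD μ n / (((n-1).factorial : ℝ) * (n.factorial : ℝ)) :=
        div_nonneg hD (le_of_lt hfac)
      nlinarith [hend]
    nlinarith [sq_nonneg (b n), hge]
  calc μ * ∑ k ∈ Finset.Icc 1 n, (b k)^2
      = ∑ k ∈ Finset.Icc 1 (n-1), μ * (b k)^2 + μ * (b n)^2 := by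
        obtain ⟨K, rfl⟩ := Nat.exists_eq_add_of_le hn
        rw [Nat.add_comm 1 K]
        have h2 : (K + 1) - 1 = K := by omega
        rw [h2, Finset.sum_Icc_succ_top (by omega : 1 ≤ K + 1) (fun k => (b k)^2), mul_add,
          Finset.mul_sum]
    _ ≤ _ := by
        apply add_le_add
        · exact Finset.sum_le_sum hterm
        · exact hrem

/-- value of the Hardy form on the eigenvector when DD μ n = 0 -/
lemma Tval (n : ℕ) (hn : 1 ≤ n) (μ : ℝ) (hD : DD μ n = 0) :
    ∑ k ∈ Finset.Icc 1 n, ((k:ℝ) * vv μ k - ((k:ℝ)-1) * vv μ (k-1))^2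
      = μ * ∑ k ∈ Finset.Icc 1 n, (vv μ k)^2 := by
  rw [sbp n hn (vv μ)]
  have hterm : ∀ k ∈ Finset.Icc 1 (n-1),
      vv μ k * (2*(k:ℝ)^2 * vv μ k - ((k:ℝ)-1)*(k:ℝ) * vv μ (k-1)
        - (k:ℝ)*((k:ℝ)+1) * vv μ (k+1)) = μ * (vv μ k)^2 := by
    intro k hk
    rw [Finset.mem_Icc] at hk
    have hrow := vv_row μ k hk.1
    linear_combination (vv μ k) * hrow
  rw [Finset.sum_congr rfl hterm]
  have hlast : vv μ n * ((n:ℝ)^2 * vv μ n - ((n:ℝ)-1)*(n:ℝ) * vv μ (n-1)) = μ * (vv μ n)^2 := by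
    have hend := vv_row_end μ n hn
    rw [hD] at hend
    have : ((n:ℝ)^2 - μ) * vv μ n - ((n:ℝ)-1)*(n:ℝ) * vv μ (n-1) = 0 := by
      rw [hend]; simp
    linear_combination (vv μ n) * this
  rw [hlast]
  obtain ⟨K, rfl⟩ := Nat.exists_eq_add_of_le hn
  rw [Nat.add_comm 1 K]
  have h2 : (K + 1) - 1 = K := by omega
  rw [h2, Finset.sum_Icc_succ_top (by omega : 1 ≤ K + 1) (fun k => (vv μ k)^2), mul_add,
    Finset.mul_sum]

set_option maxHeartbeats 1000000 in
theorem discrete_hardy_eq_dual_hahn_zero (n : ℕ) (hn : 1 ≤ n) (x₁ : ℝ)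
    (hx₁ : IsLeast {x : ℝ | 0 < x ∧ contDualHahnHalf n x = 0} x₁)
    (d : ℝ)
    (hd : IsLeast {c : ℝ | ∀ a : ℕ → ℝ,
      ∑ k ∈ Finset.Icc 1 n, ((1 / (k : ℝ)) * ∑ j ∈ Finset.Icc 1 k, a j) ^ 2
        ≤ c * ∑ k ∈ Finset.Icc 1 n, (a k) ^ 2} d) :
    d = 4 * (1 - 4 * x₁ ^ 2 / (1 + 4 * x₁ ^ 2)) ∧ d = 4 / (1 + 4 * x₁ ^ 2) := by
  classical
  obtain ⟨⟨hx0, hSx⟩, hxlb⟩ := hx₁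
  obtain ⟨hdmem, hdlb⟩ := hd
  set m : ℝ := 1/4 + x₁^2 with hm
  have hm4 : 1/4 < m := by nlinarith
  have hm0 : 0 < m := lt_trans (by norm_num) hm4
  have hDm : DD m n = 0 := by rw [hm, DD_eq_S n hn]; exact hSx
  -- the set of spectral-type points in [1/4, m]
  set Z : Set ℝ := {μ | μ ∈ Set.Icc (1/4:ℝ) m ∧
      (DD μ n = 0 ∨ ∃ j, 1 ≤ j ∧ j < n ∧ EE μ j = 0)} with hZ
  have hZclosed : IsClosed Z := by
    have : Z = Set.Icc (1/4:ℝ) m ∩ ((fun μ => DD μ n) ⁻¹' {0}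
        ∪ ⋃ j ∈ Finset.Ico 1 n, (fun μ => EE μ j) ⁻¹' {0}) := by
      ext μ
      simp only [hZ, Set.mem_setOf_eq, Set.mem_inter_iff, Set.mem_union, Set.mem_preimage,
        Set.mem_singleton_iff, Set.mem_iUnion, Finset.mem_Ico, exists_prop]
      tauto
    rw [this]
    apply isClosed_Icc.inter
    apply IsClosed.union
    · exact isClosed_singleton.preimage (continuous_DD n)
    · exact Set.Finite.isClosed_biUnion (Finset.Ico 1 n).finite_toSet
        (fun j _ => isClosed_singleton.preimage (continuous_EE j))
  have hZcpt : IsCompact Z := IsCompact.of_isClosed_subset isCompact_Icc hZclosed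
    (fun μ h => h.1)
  have hZne : Z.Nonempty := ⟨m, ⟨⟨le_of_lt hm4, le_rfl⟩, Or.inl hDm⟩⟩
  obtain ⟨μs, hμsZ, hμslb⟩ := hZcpt.exists_isLeast hZne
  have hμsm : μs ≤ m := hμsZ.1.2
  have hμs4 : 1/4 ≤ μs := hμsZ.1.1
  have hnozero : ∀ μ, 1/4 ≤ μ → μ < μs →
      ¬(DD μ n = 0 ∨ ∃ j, 1 ≤ j ∧ j < n ∧ EE μ j = 0) := by
    intro μ h1 h2 hor
    exact absurd (hμslb ⟨⟨h1, le_trans (le_of_lt h2) hμsm⟩, hor⟩) (not_le.mpr h2)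
  have hposE : ∀ μ, 1/4 ≤ μ → μ < μs → ∀ j, j < n → 0 < EE μ j := by
    intro μ h1 h2 j hj
    rcases Nat.eq_zero_or_pos j with rfl | hj1
    · rw [EE_zero]; norm_num
    by_contra hle
    push_neg at hle
    obtain ⟨c, hcmem, hc0⟩ := intermediate_value_Icc' h1 (continuous_EE j).continuousOn
      ⟨hle, le_of_lt (EE_quarter_pos j)⟩
    exact hnozero c hcmem.1 (lt_of_le_of_lt hcmem.2 h2) (Or.inr ⟨j, hj1, hj, hc0⟩)
  have hposD : ∀ μ, 1/4 ≤ μ → μ < μs → 0 < DD μ n := by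
    intro μ h1 h2
    by_contra hle
    push_neg at hle
    obtain ⟨c, hcmem, hc0⟩ := intermediate_value_Icc' h1 (continuous_DD n).continuousOn
      ⟨hle, le_of_lt (DD_quarter_pos n hn)⟩
    exact hnozero c hcmem.1 (lt_of_le_of_lt hcmem.2 h2) (Or.inl hc0)
  have hμs4' : 1/4 < μs := by
    rcases eq_or_lt_of_le hμs4 with heq | h
    · exfalso
      rcases hμsZ.2 with hDz | ⟨j, hj1, hjn, hEz⟩
      · rw [← heq] at hDz
        exact absurd hDz (ne_of_gt (DD_quarter_pos n hn))
      · rw [← heq] at hEz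
        exact absurd hEz (ne_of_gt (EE_quarter_pos j))
    · exact h
  -- μs is a lower bound for the Rayleigh quotient
  have hTs : ∀ b : ℕ → ℝ, μs * ∑ k ∈ Finset.Icc 1 n, (b k)^2
      ≤ ∑ k ∈ Finset.Icc 1 n, ((k:ℝ) * b k - ((k:ℝ)-1) * b (k-1))^2 := by
    intro b
    set S := ∑ k ∈ Finset.Icc 1 n, (b k)^2 with hS
    set T := ∑ k ∈ Finset.Icc 1 n, ((k:ℝ) * b k - ((k:ℝ)-1) * b (k-1))^2 with hT
    have hS0 : 0 ≤ S := Finset.sum_nonneg (fun k _ => sq_nonneg _)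
    have hT0 : 0 ≤ T := Finset.sum_nonneg (fun k _ => sq_nonneg _)
    have key : ∀ μ, 1/4 < μ → μ < μs → μ * S ≤ T := by
      intro μ ha hb
      exact Tlower n hn μ (hposE μ (le_of_lt ha) hb) (le_of_lt (hposD μ (le_of_lt ha) hb)) b
    by_contra hcon
    push_neg at hcon
    have hSpos : 0 < S := by
      rcases eq_or_lt_of_le hS0 with heq | h
      · rw [← heq] at hcon; simp at hcon; linarith
      · exact h
    set μ := (max (T/S) (1/4) + μs)/2 with hμ
    have h1 : T/S < μs := (div_lt_iff₀ hSpos).mpr (by nlinarith)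
    have hmax : max (T/S) (1/4) < μs := max_lt h1 hμs4'
    have hμa : 1/4 < μ := by
      have := le_max_right (T/S) (1/4:ℝ)
      rw [hμ]; nlinarith
    have hμb : μ < μs := by rw [hμ]; nlinarith
    have hμc : T/S < μ := by
      have := le_max_left (T/S) (1/4:ℝ)
      rw [hμ]; nlinarith
    have hk := key μ hμa hμb
    rw [div_lt_iff₀ hSpos] at hμc
    nlinarith
  -- nonnegativity at μs
  have hEnonneg : ∀ j, 1 ≤ j → j < n → 0 ≤ EE μs j := by
    intro j hj1 hjn
    by_contra hlt
    push_neg at hlt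
    obtain ⟨c, hcmem, hc0⟩ := intermediate_value_Icc' hμs4 (continuous_EE j).continuousOn
      ⟨le_of_lt hlt, le_of_lt (EE_quarter_pos j)⟩
    have hcne : c ≠ μs := by
      intro h
      rw [h] at hc0
      exact absurd hc0 (ne_of_lt hlt)
    exact hnozero c hcmem.1 (lt_of_le_of_ne hcmem.2 hcne) (Or.inr ⟨j, hj1, hjn, hc0⟩)
  -- strict positivity of minors at μs via perturbation argument
  have hEμs_pos : ∀ j, j < n → 0 < EE μs j := by
    intro j hjn
    rcases Nat.eq_zero_or_pos j with rfl | hj1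
    · rw [EE_zero]; norm_num
    rcases lt_or_eq_of_le (hEnonneg j hj1 hjn) with h | heq
    · exact h
    exfalso
    have hex : ∃ i, 1 ≤ i ∧ i < n ∧ EE μs i = 0 := ⟨j, hj1, hjn, heq.symm⟩
    set j0 := Nat.find hex with hj0def
    obtain ⟨hj01, hj0n, hj0z⟩ : 1 ≤ j0 ∧ j0 < n ∧ EE μs j0 = 0 := Nat.find_spec hex
    have hminpos : ∀ i, i < j0 → 0 < EE μs i := by
      intro i hi
      rcases Nat.eq_zero_or_pos i with rfl | hi1
      · rw [EE_zero]; norm_num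
      have hne : EE μs i ≠ 0 := fun hz => Nat.find_min hex hi ⟨hi1, by omega, hz⟩
      exact lt_of_le_of_ne (hEnonneg i hi1 (by omega)) (Ne.symm hne)
    have hvj0 : 0 < vv μs j0 := vv_pos μs j0 hj01 (hminpos (j0-1) (by omega))
    have hvj0succ : vv μs (j0+1) = 0 := by
      rw [vv_succ, hj0z]; simp
    set bb : ℕ → ℝ := fun k => if k ≤ j0 then vv μs k else (0:ℝ) with hbbdef
    have hbbj01 : bb (j0+1) = 0 := if_neg (by omega)
    have hbbj0 : bb j0 = vv μs j0 := if_pos le_rfl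
    have hbbn : bb n = 0 := if_neg (by omega)
    -- value of the form on bb
    have hTbb : ∑ k ∈ Finset.Icc 1 n, ((k:ℝ)*bb k - ((k:ℝ)-1)*bb (k-1))^2
        = μs * ∑ k ∈ Finset.Icc 1 n, (bb k)^2 := by
      rw [sbp n hn bb]
      have hterm : ∀ k ∈ Finset.Icc 1 (n-1),
          bb k * (2*(k:ℝ)^2 * bb k - ((k:ℝ)-1)*(k:ℝ) * bb (k-1) - (k:ℝ)*((k:ℝ)+1) * bb (k+1))
            = μs * (bb k)^2 := by
        intro k hk
        rw [Finset.mem_Icc] at hk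
        by_cases hkj : k ≤ j0
        · have hbbk : bb k = vv μs k := if_pos hkj
          have hbbkm : bb (k-1) = vv μs (k-1) := if_pos (by omega)
          by_cases hkj1 : k + 1 ≤ j0
          · have hbbkp : bb (k+1) = vv μs (k+1) := if_pos hkj1
            rw [hbbk, hbbkm, hbbkp]
            linear_combination (vv μs k) * vv_row μs k hk.1
          · have hkeq : k = j0 := by omega
            have hbbkp : bb (k+1) = 0 := if_neg (by omega)
            rw [hbbk, hbbkm, hbbkp]
            have hrow := vv_row μs k hk.1
            have hzz : vv μs (k+1) = 0 := by rw [hkeq]; exact hvj0succ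
            rw [hzz] at hrow
            linear_combination (vv μs k) * hrow
        · have hbbk : bb k = 0 := if_neg hkj
          rw [hbbk]; ring
      rw [Finset.sum_congr rfl hterm]
      obtain ⟨K, rfl⟩ := Nat.exists_eq_add_of_le hn
      rw [Nat.add_comm 1 K]
      have hbbn' : bb (K+1) = 0 := if_neg (by omega)
      have h2 : (K + 1) - 1 = K := by omega
      rw [h2, Finset.sum_Icc_succ_top (by omega : 1 ≤ K + 1) (fun k => (bb k)^2), mul_add,
        Finset.mul_sum, hbbn']
      ring
    -- perturbation
    have hj0r : (0:ℝ) < (j0:ℝ) := by exact_mod_cast hj01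
    set ε : ℝ := (j0:ℝ)*((j0:ℝ)+1)*vv μs j0 / (2*((j0:ℝ)+1)^2) with hεdef
    have hεpos : 0 < ε := by
      apply div_pos
      · positivity
      · positivity
    have hεeq : 2*((j0:ℝ)+1)^2*ε = (j0:ℝ)*((j0:ℝ)+1)*vv μs j0 := by
      rw [hεdef]
      field_simp
    set bb' : ℕ → ℝ := Function.update bb (j0+1) ε with hbb'def
    have hj01mem : j0 + 1 ∈ Finset.Icc 1 n := Finset.mem_Icc.mpr ⟨by omega, by omega⟩
    have hsum' : ∑ k ∈ Finset.Icc 1 n, (bb' k)^2 = ∑ k ∈ Finset.Icc 1 n, (bb k)^2 + ε^2 := by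
      have hfun : (fun k => (bb' k)^2) = Function.update (fun k => (bb k)^2) (j0+1) (ε^2) := by
        funext k
        by_cases hk : k = j0+1
        · subst hk; rw [hbb'def]; simp
        · rw [hbb'def]; simp [Function.update_of_ne hk]
      rw [hfun, Finset.sum_update_of_mem hj01mem,
        Finset.sum_eq_sum_sdiff_singleton_add hj01mem (fun k => (bb k)^2), hbbj01]
      ring
    -- compare quadratic forms termwise
    have hupd_ne : ∀ k, k ≠ j0 + 1 → bb' k = bb k := by
      intro k hk; rw [hbb'def]; exact Function.update_of_ne hk _ _
    have hupd_eq : bb' (j0+1) = ε := by rw [hbb'def]; simp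
    have hf'eq : ∀ k, k ≠ j0+1 → k ≠ j0+2 →
        ((k:ℝ)*bb' k - ((k:ℝ)-1)*bb' (k-1))^2 = ((k:ℝ)*bb k - ((k:ℝ)-1)*bb (k-1))^2 := by
      intro k h1 h2
      rw [hupd_ne k h1, hupd_ne (k-1) (by omega)]
    have hfj01 : ((((j0+1):ℕ):ℝ)*bb (j0+1) - ((((j0+1):ℕ):ℝ)-1)*bb ((j0+1)-1))^2
        = ((j0:ℝ) * vv μs j0)^2 := by
      have : (j0+1) - 1 = j0 := by omega
      rw [this, hbbj01, hbbj0]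
      push_cast
      ring
    have hf'j01 : ((((j0+1):ℕ):ℝ)*bb' (j0+1) - ((((j0+1):ℕ):ℝ)-1)*bb' ((j0+1)-1))^2
        = (((j0:ℝ)+1)*ε - (j0:ℝ) * vv μs j0)^2 := by
      have h3 : (j0+1) - 1 = j0 := by omega
      rw [h3, hupd_eq, hupd_ne j0 (by omega), hbbj0]
      push_cast
      ring
    have hTs' := hTs bb'
    rw [hsum'] at hTs'
    -- bound T(bb')
    have hTbb' : ∑ k ∈ Finset.Icc 1 n, ((k:ℝ)*bb' k - ((k:ℝ)-1)*bb' (k-1))^2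
        ≤ μs * ∑ k ∈ Finset.Icc 1 n, (bb k)^2
          + ((((j0:ℝ)+1)*ε - (j0:ℝ) * vv μs j0)^2 - ((j0:ℝ) * vv μs j0)^2 + (((j0:ℝ)+1)*ε)^2) := by
      rcases le_or_gt (j0+2) n with hcase | hcase
      · -- both indices present
        have hj02mem : j0 + 2 ∈ (Finset.Icc 1 n).erase (j0+1) :=
          Finset.mem_erase.mpr ⟨by omega, Finset.mem_Icc.mpr ⟨by omega, hcase⟩⟩
        have hbbj02 : bb (j0+2) = 0 := if_neg (by omega)
        have hfj02 : ((((j0+2):ℕ):ℝ)*bb (j0+2) - ((((j0+2):ℕ):ℝ)-1)*bb ((j0+2)-1))^2 = 0 := by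
          have h3 : (j0+2) - 1 = j0+1 := by omega
          rw [h3, hbbj02, hbbj01]
          ring
        have hf'j02 : ((((j0+2):ℕ):ℝ)*bb' (j0+2) - ((((j0+2):ℕ):ℝ)-1)*bb' ((j0+2)-1))^2
            = (((j0:ℝ)+1)*ε)^2 := by
          have h3 : (j0+2) - 1 = j0+1 := by omega
          rw [h3, hupd_eq, hupd_ne (j0+2) (by omega), hbbj02]
          push_cast
          ring
        have hsplit' : ∑ k ∈ Finset.Icc 1 n, ((k:ℝ)*bb' k - ((k:ℝ)-1)*bb' (k-1))^2
            = ((((j0+1):ℕ):ℝ)*bb' (j0+1) - ((((j0+1):ℕ):ℝ)-1)*bb' ((j0+1)-1))^2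
              + (((((j0+2):ℕ):ℝ)*bb' (j0+2) - ((((j0+2):ℕ):ℝ)-1)*bb' ((j0+2)-1))^2
              + ∑ k ∈ ((Finset.Icc 1 n).erase (j0+1)).erase (j0+2),
                  ((k:ℝ)*bb' k - ((k:ℝ)-1)*bb' (k-1))^2) := by
          rw [(Finset.add_sum_erase _ (fun (k:ℕ) => ((k:ℝ)*bb' k - ((k:ℝ)-1)*bb' (k-1))^2) hj02mem :
            _ = _), (Finset.add_sum_erase _ (fun (k:ℕ) => ((k:ℝ)*bb' k - ((k:ℝ)-1)*bb' (k-1))^2)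
            hj01mem : _ = _)]
        have hsplit : ∑ k ∈ Finset.Icc 1 n, ((k:ℝ)*bb k - ((k:ℝ)-1)*bb (k-1))^2
            = ((((j0+1):ℕ):ℝ)*bb (j0+1) - ((((j0+1):ℕ):ℝ)-1)*bb ((j0+1)-1))^2
              + (((((j0+2):ℕ):ℝ)*bb (j0+2) - ((((j0+2):ℕ):ℝ)-1)*bb ((j0+2)-1))^2
              + ∑ k ∈ ((Finset.Icc 1 n).erase (j0+1)).erase (j0+2),
                  ((k:ℝ)*bb k - ((k:ℝ)-1)*bb (k-1))^2) := by
          rw [(Finset.add_sum_erase _ (fun (k:ℕ) => ((k:ℝ)*bb k - ((k:ℝ)-1)*bb (k-1))^2) hj02mem :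
            _ = _), (Finset.add_sum_erase _ (fun (k:ℕ) => ((k:ℝ)*bb k - ((k:ℝ)-1)*bb (k-1))^2)
            hj01mem : _ = _)]
        have hinner : ∑ k ∈ ((Finset.Icc 1 n).erase (j0+1)).erase (j0+2),
              ((k:ℝ)*bb' k - ((k:ℝ)-1)*bb' (k-1))^2
            = ∑ k ∈ ((Finset.Icc 1 n).erase (j0+1)).erase (j0+2),
              ((k:ℝ)*bb k - ((k:ℝ)-1)*bb (k-1))^2 := by
          apply Finset.sum_congr rfl
          intro k hk
          have h1 := (Finset.mem_erase.mp hk).1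
          have h2 := (Finset.mem_erase.mp (Finset.mem_erase.mp hk).2).1
          exact hf'eq k h2 h1
        rw [hsplit', hinner, hf'j01, hf'j02, ← hTbb, hsplit, hfj01, hfj02]
        linarith
      · -- n = j0+1
        have hneq : n = j0 + 1 := by omega
        have hsplit' : ∑ k ∈ Finset.Icc 1 n, ((k:ℝ)*bb' k - ((k:ℝ)-1)*bb' (k-1))^2
            = ((((j0+1):ℕ):ℝ)*bb' (j0+1) - ((((j0+1):ℕ):ℝ)-1)*bb' ((j0+1)-1))^2
              + ∑ k ∈ (Finset.Icc 1 n).erase (j0+1),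
                  ((k:ℝ)*bb' k - ((k:ℝ)-1)*bb' (k-1))^2 :=
        (Finset.add_sum_erase _ (fun (k:ℕ) => ((k:ℝ)*bb' k - ((k:ℝ)-1)*bb' (k-1))^2) hj01mem).symm
        have hsplit : ∑ k ∈ Finset.Icc 1 n, ((k:ℝ)*bb k - ((k:ℝ)-1)*bb (k-1))^2
            = ((((j0+1):ℕ):ℝ)*bb (j0+1) - ((((j0+1):ℕ):ℝ)-1)*bb ((j0+1)-1))^2
              + ∑ k ∈ (Finset.Icc 1 n).erase (j0+1),
                  ((k:ℝ)*bb k - ((k:ℝ)-1)*bb (k-1))^2 :=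
        (Finset.add_sum_erase _ (fun (k:ℕ) => ((k:ℝ)*bb k - ((k:ℝ)-1)*bb (k-1))^2) hj01mem).symm
        have hinner : ∑ k ∈ (Finset.Icc 1 n).erase (j0+1),
              ((k:ℝ)*bb' k - ((k:ℝ)-1)*bb' (k-1))^2
            = ∑ k ∈ (Finset.Icc 1 n).erase (j0+1),
              ((k:ℝ)*bb k - ((k:ℝ)-1)*bb (k-1))^2 := by
          apply Finset.sum_congr rfl
          intro k hk
          have h1 := (Finset.mem_erase.mp hk).1
          have h2 : k ≤ n := (Finset.mem_Icc.mp (Finset.mem_erase.mp hk).2).2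
          exact hf'eq k h1 (by omega)
        rw [hsplit', hinner, hf'j01, ← hTbb, hsplit, hfj01]
        nlinarith [sq_nonneg (((j0:ℝ)+1)*ε)]
    have hfinal := le_trans hTs' hTbb'
    -- μs(∑bb² + ε²) ≤ μs∑bb² + (...)
    have hquad : μs * ε^2 ≤ ((((j0:ℝ)+1)*ε - (j0:ℝ)*vv μs j0)^2
        - ((j0:ℝ)*vv μs j0)^2 + (((j0:ℝ)+1)*ε)^2) := by nlinarith [hfinal]
    have hrw : ((((j0:ℝ)+1)*ε - (j0:ℝ)*vv μs j0)^2 - ((j0:ℝ)*vv μs j0)^2 + (((j0:ℝ)+1)*ε)^2)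
        = 2*((j0:ℝ)+1)^2*ε^2 - 2*(j0:ℝ)*((j0:ℝ)+1)*ε*vv μs j0 := by ring
    rw [hrw] at hquad
    have hεeq2 : 2*((j0:ℝ)+1)^2*ε^2 = (j0:ℝ)*((j0:ℝ)+1)*vv μs j0 * ε := by
      linear_combination ε * hεeq
    have hμspos : (0:ℝ) < μs := lt_trans (by norm_num) hμs4'
    have hp1 : 0 < μs * ε^2 := mul_pos hμspos (by positivity)
    have hp2 : 0 < (j0:ℝ)*((j0:ℝ)+1)*ε*vv μs j0 :=
      mul_pos (mul_pos (mul_pos hj0r (by linarith)) hεpos) hvj0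
    linarith
  -- μs is a zero of DD, and equals m by minimality of x₁
  have hDμs : DD μs n = 0 := by
    rcases hμsZ.2 with h | ⟨j, hj1, hjn, hz⟩
    · exact h
    · exact absurd hz (ne_of_gt (hEμs_pos j hjn))
  have hμseq : μs = m := by
    rcases eq_or_lt_of_le hμsm with heq | hlt
    · exact heq
    exfalso
    set x' := Real.sqrt (μs - 1/4) with hx'
    have hx'pos : 0 < x' := Real.sqrt_pos.mpr (by linarith)
    have hx'sq : x'^2 = μs - 1/4 := Real.sq_sqrt (by linarith)
    have hS' : contDualHahnHalf n x' = 0 := by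
      rw [← DD_eq_S n hn]
      have hh : (1/4 + x'^2) = μs := by rw [hx'sq]; ring
      rw [hh]
      exact hDμs
    have hle := hxlb ⟨hx'pos, hS'⟩
    have : m ≤ μs := by rw [hm]; nlinarith [hx'sq]
    linarith
  have hEm : ∀ j, j < n → 0 < EE m j := fun j hj => hμseq ▸ hEμs_pos j hj
  -- membership of 1/m in the Hardy constant set
  have hmem : ∀ a : ℕ → ℝ,
      ∑ k ∈ Finset.Icc 1 n, ((1/(k:ℝ)) * ∑ j ∈ Finset.Icc 1 k, a j)^2
        ≤ (1/m) * ∑ k ∈ Finset.Icc 1 n, (a k)^2 := by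
    intro a
    set b : ℕ → ℝ := fun k => if k = 0 then 0 else (1/(k:ℝ)) * ∑ j ∈ Finset.Icc 1 k, a j
      with hbdef
    have hQ : ∑ k ∈ Finset.Icc 1 n, ((1/(k:ℝ)) * ∑ j ∈ Finset.Icc 1 k, a j)^2
        = ∑ k ∈ Finset.Icc 1 n, (b k)^2 := by
      apply Finset.sum_congr rfl
      intro k hk
      rw [Finset.mem_Icc] at hk
      have : b k = (1/(k:ℝ)) * ∑ j ∈ Finset.Icc 1 k, a j := by
        rw [hbdef]; exact if_neg (by omega)
      rw [this]
    have hkb : ∀ k : ℕ, 1 ≤ k → (k:ℝ) * b k = ∑ j ∈ Finset.Icc 1 k, a j := by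
      intro k hk
      have hbk : b k = (1/(k:ℝ)) * ∑ j ∈ Finset.Icc 1 k, a j := by
        rw [hbdef]; exact if_neg (by omega)
      rw [hbk]
      have : (k:ℝ) ≠ 0 := Nat.cast_ne_zero.mpr (by omega)
      field_simp
    have hab : ∀ k ∈ Finset.Icc 1 n, a k = (k:ℝ)*b k - ((k:ℝ)-1)*b (k-1) := by
      intro k hk
      rw [Finset.mem_Icc] at hk
      obtain ⟨i, rfl⟩ := Nat.exists_eq_add_of_le hk.1
      rw [Nat.add_comm 1 i]
      rcases Nat.eq_zero_or_pos i with rfl | hi1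
      · -- k = 1
        have h0 : b 0 = 0 := by rw [hbdef]; exact if_pos rfl
        have h1 := hkb 1 le_rfl
        rw [Finset.Icc_self, Finset.sum_singleton] at h1
        have hsub : (1:ℕ) - 1 = 0 := rfl
        rw [hsub, h0]
        push_cast
        push_cast at h1
        linarith
      · -- k = i+1, i ≥ 1
        have h1 := hkb (i+1) (by omega)
        have h2 := hkb i hi1
        have hsub : (i+1) - 1 = i := by omega
        rw [hsub]
        rw [Finset.sum_Icc_succ_top (by omega : 1 ≤ i + 1)] at h1
        push_cast at h1 h2 ⊢
        linarith
    have hN : ∑ k ∈ Finset.Icc 1 n, (a k)^2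
        = ∑ k ∈ Finset.Icc 1 n, ((k:ℝ)*b k - ((k:ℝ)-1)*b (k-1))^2 := by
      apply Finset.sum_congr rfl
      intro k hk
      rw [hab k hk]
    have hTlow := Tlower n hn m hEm (le_of_eq hDm.symm) b
    rw [hQ, hN]
    have h1m : 0 < 1/m := by positivity
    have := mul_le_mul_of_nonneg_left hTlow (le_of_lt h1m)
    calc ∑ k ∈ Finset.Icc 1 n, (b k)^2
        = (1/m) * (m * ∑ k ∈ Finset.Icc 1 n, (b k)^2) := by field_simp
      _ ≤ (1/m) * ∑ k ∈ Finset.Icc 1 n, ((k:ℝ)*b k - ((k:ℝ)-1)*b (k-1))^2 := this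
  have hd_le : d ≤ 1/m := hdlb hmem
  have hd_ge : 1/m ≤ d := by
    set a : ℕ → ℝ := fun k => (k:ℝ) * vv m k - ((k:ℝ)-1) * vv m (k-1) with hadef
    have htel : ∀ K, 1 ≤ K → ∑ j ∈ Finset.Icc 1 K, a j = (K:ℝ) * vv m K := by
      intro K hK
      induction K, hK using Nat.le_induction with
      | base =>
        rw [Finset.Icc_self, Finset.sum_singleton, hadef]
        norm_num
      | succ K hK ih =>
        rw [Finset.sum_Icc_succ_top (by omega : 1 ≤ K + 1), ih]
        simp only [hadef]
        have hsub : (K+1) - 1 = K := by omega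
        rw [hsub]
        push_cast
        ring
    have hQa : ∑ k ∈ Finset.Icc 1 n, ((1/(k:ℝ)) * ∑ j ∈ Finset.Icc 1 k, a j)^2
        = ∑ k ∈ Finset.Icc 1 n, (vv m k)^2 := by
      apply Finset.sum_congr rfl
      intro k hk
      rw [Finset.mem_Icc] at hk
      rw [htel k hk.1]
      have : (k:ℝ) ≠ 0 := by
        have : 1 ≤ k := hk.1
        positivity
      field_simp
    have hNa : ∑ k ∈ Finset.Icc 1 n, (a k)^2 = m * ∑ k ∈ Finset.Icc 1 n, (vv m k)^2 := by
      have hval := Tval n hn m hDm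
      simp only [hadef]
      exact hval
    have hda := hdmem a
    rw [hQa, hNa] at hda
    have hw1 : vv m 1 = 1 := vv_one m
    have hmem1 : (1:ℕ) ∈ Finset.Icc 1 n := Finset.mem_Icc.mpr ⟨le_rfl, hn⟩
    have hsum1 : 1 ≤ ∑ k ∈ Finset.Icc 1 n, (vv m k)^2 := by
      have h := Finset.single_le_sum (f := fun k => (vv m k)^2) (fun k _ => sq_nonneg _) hmem1
      simpa [hw1] using h
    have hspos : 0 < ∑ k ∈ Finset.Icc 1 n, (vv m k)^2 := lt_of_lt_of_le one_pos hsum1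
    rw [div_le_iff₀ hm0]
    nlinarith [hda, hspos]
  have hdm : d = 1/m := le_antisymm hd_le hd_ge
  have h1p : (0:ℝ) < 1 + 4*x₁^2 := by positivity
  constructor
  · rw [hdm, hm]
    field_simp
    ring
  · rw [hdm, hm]
    field_simp
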